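/- If every set of at most 2s columns of D ∈ ℝ^{n×m} is linearly independent (i.e., 2s < σ(D)), then any two vectors γ₁, γ₂ with ‖γ₁‖₀ ≤ s, ‖γ₂‖₀ ≤ s, and Dγ₁ = Dγ₂ must be equal. -/
import Mathlib


/-- The ℓ₀ "norm": number of nonzero entries. -/
noncomputable def l0 {m : ℕ} (γ : Fin m → ℝ) : ℕ := {i | γ i ≠ 0}.ncard

/-- If every set of at most 2s columns of D is linearly independent, then any two
s-sparse vectors with the same image under D are equal. -/
theorem stmt2 {n m : ℕ} (D : Matrix (Fin n) (Fin m) ℝ) (s : ℕ)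
    (hind : ∀ t : Finset (Fin m), t.card ≤ 2 * s →
      LinearIndependent ℝ (fun j : {x // x ∈ t} => fun i => D i j.1))
    (γ₁ γ₂ : Fin m → ℝ) (h₁ : l0 γ₁ ≤ s) (h₂ : l0 γ₂ ≤ s)
    (heq : D.mulVec γ₁ = D.mulVec γ₂) : γ₁ = γ₂ := by
  classical
  set δ : Fin m → ℝ := fun i => γ₁ i - γ₂ i with hδ
  have hsub : {i | δ i ≠ 0} ⊆ {i | γ₁ i ≠ 0} ∪ {i | γ₂ i ≠ 0} := by
    intro i hi
    by_contra h
    simp only [Set.mem_union, Set.mem_setOf_eq, not_or, not_not] at h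
    exact hi (by simp [hδ, h.1, h.2])
  set t : Finset (Fin m) := (Set.toFinite {i | δ i ≠ 0}).toFinset with ht
  have htcard : t.card ≤ 2 * s := by
    have : {i | δ i ≠ 0}.ncard = t.card := Set.ncard_eq_toFinset_card _ (Set.toFinite _)
    rw [← this]
    calc {i | δ i ≠ 0}.ncard ≤ ({i | γ₁ i ≠ 0} ∪ {i | γ₂ i ≠ 0}).ncard :=
          Set.ncard_le_ncard hsub (Set.toFinite _)
      _ ≤ {i | γ₁ i ≠ 0}.ncard + {i | γ₂ i ≠ 0}.ncard := Set.ncard_union_le _ _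
      _ ≤ s + s := Nat.add_le_add h₁ h₂
      _ = 2 * s := by ring
  have hli := hind t htcard
  rw [Fintype.linearIndependent_iff] at hli
  have hzero : D.mulVec δ = 0 := by
    ext i
    have := congrFun heq i
    simp only [Matrix.mulVec, dotProduct] at this
    show (∑ x, D i x * (γ₁ x - γ₂ x)) = 0
    simp [mul_sub, Finset.sum_sub_distrib, this]
  have hsum : ∀ i : Fin n, ∑ j : {x // x ∈ t}, δ j.1 * D i j.1 = 0 := by
    intro i
    have h1 : ∑ j : {x // x ∈ t}, δ j.1 * D i j.1 = ∑ j ∈ t, δ j * D i j :=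
      Finset.sum_attach t (fun j => δ j * D i j)
    have h2 : ∑ j ∈ t, δ j * D i j = ∑ j : Fin m, δ j * D i j := by
      apply Finset.sum_subset (Finset.subset_univ t)
      intro x _ hx
      have : δ x = 0 := by
        by_contra hc
        exact hx (by simpa [ht] using hc)
      simp [this]
    have h3 : ∑ j : Fin m, δ j * D i j = D.mulVec δ i := by
      simp [Matrix.mulVec, dotProduct, mul_comm]
    rw [h1, h2, h3, hzero]; rfl
  have hall : ∀ j : {x // x ∈ t}, δ j.1 = 0 := by
    apply hli (fun j => δ j.1)
    ext i
    simpa [smul_eq_mul] using (hsum i)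
  funext i
  have : δ i = 0 := by
    by_cases hi : i ∈ t
    · exact hall ⟨i, hi⟩
    · by_contra hc
      exact hi (by simpa [ht] using hc)
  have := sub_eq_zero.mp this
  exact this
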